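/- Let d, l, m ≥ 1 and let I^d_k denote the d-dimensional k-permutation matrix with 1-entries at (i,i,…,i) for i ∈ [k]. Then |S_{I^d_{l+1}}(lm)| ≥ |S_{I^d_2}(m)|^l · C(lm; m,…,m)^{d−1}, where C(lm; m,…,m) = (lm)!/(m!)^l is the multinomial coefficient. -/
import Mathlib


open Asymptotics

noncomputable section

/-- A `d`-dimensional binary matrix `P` of size `a × ⋯ × a` is contained in `A` of size
`n × ⋯ × n` if there are `d` strictly increasing maps sending 1-entries of `P` to 1-entries
of `A`. -/
def containsT {d a n : ℕ} (P : (Fin d → Fin a) → Bool) (A : (Fin d → Fin n) → Bool) : Prop :=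
  ∃ f : Fin d → (Fin a → Fin n), (∀ i, StrictMono (f i)) ∧
    ∀ x, P x = true → A (fun i => f i (x i)) = true

/-- `M` is a `d`-dimensional `n`-permutation matrix: its 1-entries are the positions
`(π 0 a, …, π (d-1) a)` for `a ∈ [n]`, where the `π i` are permutations of `[n]`. -/
def isPermTensor {d n : ℕ} (M : (Fin d → Fin n) → Bool) : Prop :=
  ∃ π : Fin d → Equiv.Perm (Fin n), ∀ x, (M x = true ↔ ∃ a, ∀ i, x i = π i a)

/-- `|S_P(n)|`: the number of `d`-dimensional `n`-permutation matrices avoiding `P`. -/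
def cardS {d a : ℕ} (P : (Fin d → Fin a) → Bool) (n : ℕ) : ℕ :=
  Nat.card {M : (Fin d → Fin n) → Bool // isPermTensor M ∧ ¬ containsT P M}

/-- `|T_P(u)|`: the number of `d`-dimensional binary matrices of size `u × ⋯ × u` avoiding `P`. -/
def cardT {d a : ℕ} (P : (Fin d → Fin a) → Bool) (u : ℕ) : ℕ :=
  Nat.card {M : (Fin d → Fin u) → Bool // ¬ containsT P M}

/-- `I^d_k`: the `d`-dimensional `k`-permutation matrix with 1-entries at `(i,…,i)`. -/
def diagT (d k : ℕ) : (Fin d → Fin k) → Bool :=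
  fun x => decide (∃ a : Fin k, ∀ i, x i = a)

namespace Stmt14Aux

/-- colorings of `Fin (l*m)` by `Fin l` with all fibers of size `m`. -/
def CT (l m : ℕ) : Type := {c : Fin (l*m) → Fin l // ∀ k,
  (Finset.univ.filter (fun y => c y = k)).card = m}

instance (l m : ℕ) : Finite (CT l m) := by unfold CT; infer_instance

lemma card_filter_fst {l m : ℕ} (g : Fin (l*m) ≃ Fin l × Fin m) (k : Fin l) :
    (Finset.univ.filter (fun y => (g y).1 = k)).card = m := by
  classical
  have e2 : {z : Fin l × Fin m // z.1 = k} ≃ Fin m :=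
    { toFun := fun z => z.1.2
      invFun := fun b => ⟨(k, b), rfl⟩
      left_inv := by rintro ⟨⟨k', b⟩, rfl⟩; rfl
      right_inv := fun b => rfl }
  have := Fintype.card_congr ((g.subtypeEquiv (fun a => Iff.rfl)).trans e2)
  simpa [Fintype.card_subtype] using this

variable {l m : ℕ}

def E (l m : ℕ) : Fin (l*m) ≃ Fin l × Fin m := finProdFinEquiv.symm

def c0 (l m : ℕ) : CT l m := ⟨fun y => (E l m y).1, fun k => card_filter_fst (E l m) k⟩

def fib (c : CT l m) (k : Fin l) : Finset (Fin (l*m)) :=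
  Finset.univ.filter (fun y => c.1 y = k)

def emb (c : CT l m) (k : Fin l) : Fin m ↪o Fin (l*m) :=
  (fib c k).orderEmbOfFin (c.2 k)

lemma c_emb (c : CT l m) (k : Fin l) (b : Fin m) : c.1 (emb c k b) = k := by
  have h := Finset.orderEmbOfFin_mem (fib c k) (c.2 k) b
  simp only [fib, Finset.mem_filter] at h
  exact h.2

lemma emb_surj (c : CT l m) {k : Fin l} {y : Fin (l*m)} (h : c.1 y = k) :
    ∃ b, emb c k b = y := by
  have hy : y ∈ (fib c k : Set (Fin (l*m))) := by simp [fib, h]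
  rw [← Finset.range_orderEmbOfFin (fib c k) (c.2 k)] at hy
  exact hy

lemma emb_pair_inj (c : CT l m) {k k' : Fin l} {b b' : Fin m}
    (h : emb c k b = emb c k' b') : k = k' ∧ b = b' := by
  have hk : k = k' := by rw [← c_emb c k b, h, c_emb]
  subst hk
  exact ⟨rfl, (emb c k).injective h⟩

/-! ### Lower bound on the number of colorings -/

def cOf (σ : Equiv.Perm (Fin (l*m))) : CT l m :=
  ⟨fun y => (E l m (σ y)).1, fun k => card_filter_fst (σ.trans (E l m)) k⟩

def rOf (σ : Equiv.Perm (Fin (l*m))) (k : Fin l) : Fin m ↪ Fin m :=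
  ⟨fun b => (E l m (σ (emb (cOf σ) k b))).2, by
    intro b b' h
    have h1 : (E l m (σ (emb (cOf σ) k b))).1 = k := c_emb (cOf σ) k b
    have h1' : (E l m (σ (emb (cOf σ) k b'))).1 = k := c_emb (cOf σ) k b'
    have : E l m (σ (emb (cOf σ) k b)) = E l m (σ (emb (cOf σ) k b')) :=
      Prod.ext (h1.trans h1'.symm) h
    exact (emb_pair_inj (cOf σ) (σ.injective ((E l m).injective this))).2⟩

lemma G_inj : Function.Injective
    (fun σ : Equiv.Perm (Fin (l*m)) => ((cOf σ, rOf σ) : CT l m × (Fin l → (Fin m ↪ Fin m)))) := by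
  intro σ τ h
  have hc : cOf σ = cOf τ := congrArg Prod.fst h
  have hr : rOf σ = rOf τ := congrArg Prod.snd h
  apply Equiv.ext
  intro y
  obtain ⟨b, hb⟩ := emb_surj (cOf σ) (rfl : (cOf σ).1 y = (cOf σ).1 y)
  set k := (cOf σ).1 y with hk
  have hσ : E l m (σ y) = (k, rOf σ k b) := by
    apply Prod.ext
    · exact hk ▸ rfl
    · show (E l m (σ y)).2 = (E l m (σ (emb (cOf σ) k b))).2
      rw [hb]
  have hb' : emb (cOf τ) k b = y := by rw [← hc]; exact hb
  have hkτ : (cOf τ).1 y = k := by rw [← hc]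
  have hτ : E l m (τ y) = (k, rOf τ k b) := by
    apply Prod.ext
    · exact hkτ ▸ rfl
    · show (E l m (τ y)).2 = (E l m (τ (emb (cOf τ) k b))).2
      rw [hb']
  apply (E l m).injective
  rw [hσ, hτ, hr]

lemma multinomial_le_cardCT (l m : ℕ) :
    (l * m).factorial / m.factorial ^ l ≤ Nat.card (CT l m) := by
  classical
  have key : (l * m).factorial ≤ Nat.card (CT l m) * m.factorial ^ l := by
    have h := Nat.card_le_card_of_injective _ (G_inj (l := l) (m := m))
    have h1 : Nat.card (Equiv.Perm (Fin (l*m))) = (l*m).factorial := by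
      simp [Nat.card_eq_fintype_card, Fintype.card_perm]
    have h2 : Nat.card (CT l m × (Fin l → (Fin m ↪ Fin m)))
        = Nat.card (CT l m) * m.factorial ^ l := by
      rw [Nat.card_prod, Nat.card_fun]
      congr 1
      have : Nat.card (Fin m ↪ Fin m) = m.factorial := by
        simp [Nat.card_eq_fintype_card, Fintype.card_embedding_eq, Nat.descFactorial_self]
      rw [this]
      simp [Nat.card_eq_fintype_card]
    rwa [h1, h2] at h
  calc (l*m).factorial / m.factorial ^ l
      ≤ (Nat.card (CT l m) * m.factorial ^ l) / m.factorial ^ l :=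
        Nat.div_le_div_right key
    _ = Nat.card (CT l m) := Nat.mul_div_cancel _ (by positivity)

/-! ### The merge construction -/

variable {d : ℕ}

def cc (cs : Fin (d-1) → CT l m) : Fin d → CT l m :=
  fun i => if h : (i : ℕ) = 0 then c0 l m
    else cs ⟨(i : ℕ) - 1, by have := i.isLt; omega⟩

lemma cc_zero (cs : Fin (d-1) → CT l m) (h : 0 < d) : cc cs ⟨0, h⟩ = c0 l m := by
  simp [cc]

lemma cc_succ (cs : Fin (d-1) → CT l m) (j : Fin (d-1)) (h : (j : ℕ) + 1 < d) :
    cc cs ⟨(j : ℕ) + 1, h⟩ = cs j := by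
  show dite _ _ _ = _
  rw [dif_neg (by simp)]
  congr 1

def perms {n : ℕ} (M : (Fin d → Fin n) → Bool) (h : isPermTensor M) :
    Fin d → Equiv.Perm (Fin n) := h.choose

lemma perms_spec {n : ℕ} (M : (Fin d → Fin n) → Bool) (h : isPermTensor M) :
    ∀ x, M x = true ↔ ∃ a, ∀ i, x i = perms M h i a := h.choose_spec

abbrev S2 (d m : ℕ) := {M : (Fin d → Fin m) → Bool //
  isPermTensor M ∧ ¬ containsT (diagT d 2) M}

variable (Ms : Fin l → S2 d m) (cs : Fin (d-1) → CT l m)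

def ent (k : Fin l) (b : Fin m) : Fin d → Fin (l*m) :=
  fun i => emb (cc cs i) k (perms (Ms k).1 (Ms k).2.1 i b)

def A : (Fin d → Fin (l*m)) → Bool :=
  fun x => decide (∃ k b, x = ent Ms cs k b)

lemma A_iff (x : Fin d → Fin (l*m)) :
    A Ms cs x = true ↔ ∃ k b, x = ent Ms cs k b := by
  simp [A]

lemma ent_cc (k : Fin l) (b : Fin m) (i : Fin d) :
    (cc cs i).1 (ent Ms cs k b i) = k := c_emb _ _ _

lemma ent_inj_i {k k' : Fin l} {b b' : Fin m} {i : Fin d}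
    (h : ent Ms cs k b i = ent Ms cs k' b' i) : k = k' ∧ b = b' := by
  obtain ⟨hk, hb⟩ := emb_pair_inj _ h
  subst hk
  exact ⟨rfl, (perms (Ms k).1 (Ms k).2.1 i).injective hb⟩

def fA (i : Fin d) : Fin (l*m) → Fin (l*m) :=
  fun a => ent Ms cs (E l m a).1 (E l m a).2 i

lemma fA_inj (i : Fin d) : Function.Injective (fA Ms cs i) := by
  intro a a' h
  obtain ⟨hk, hb⟩ := ent_inj_i Ms cs h
  exact (E l m).injective (Prod.ext hk hb)

def piA (i : Fin d) : Equiv.Perm (Fin (l*m)) :=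
  Equiv.ofBijective (fA Ms cs i) (Finite.injective_iff_bijective.mp (fA_inj Ms cs i))

lemma A_perm : isPermTensor (A Ms cs) := by
  refine ⟨piA Ms cs, fun x => ?_⟩
  rw [A_iff]
  constructor
  · rintro ⟨k, b, rfl⟩
    refine ⟨(E l m).symm (k, b), fun i => ?_⟩
    show ent Ms cs k b i = fA Ms cs i ((E l m).symm (k, b))
    simp [fA]
  · rintro ⟨a, ha⟩
    exact ⟨(E l m a).1, (E l m a).2, funext fun i => ha i⟩

lemma A_avoids : ¬ containsT (diagT d (l+1)) (A Ms cs) := by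
  rintro ⟨f, hmono, hmap⟩
  have h1 : ∀ t : Fin (l+1), ∃ k b, (fun i => f i t) = ent Ms cs k b := by
    intro t
    have hdiag : diagT d (l+1) (fun _ => t) = true := by
      simp only [diagT, decide_eq_true_eq]
      exact ⟨t, fun _ => rfl⟩
    have := hmap _ hdiag
    rw [A_iff] at this
    exact this
  choose K B hKB using h1
  have aux : ∀ s t : Fin (l+1), s < t → K s = K t → False := by
    intro s t hst hK
    set k := K s with hk
    set σ := perms (Ms k).1 (Ms k).2.1 with hσ
    have hlt : ∀ i, σ i (B s) < σ i (B t) := by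
      intro i
      have hfs : f i s = emb (cc cs i) k (σ i (B s)) := congrFun (hKB s) i
      have hft : f i t = emb (cc cs i) k (σ i (B t)) := by
        have := congrFun (hKB t) i
        rw [← hK] at this
        exact this
      have := hmono i hst
      rw [hfs, hft] at this
      exact (emb (cc cs i) k).strictMono.lt_iff_lt.mp this
    refine (Ms k).2.2 ⟨fun i j => if j = 0 then σ i (B s) else σ i (B t), ?_, ?_⟩
    · intro i u v huv
      have hu : u = 0 := by
        have h1 := huv
        rw [Fin.lt_def] at h1
        have := v.isLt
        exact Fin.ext (by omega)
      have hv : v = 1 := by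
        rw [Fin.lt_def] at huv
        have := v.isLt
        have := u.isLt
        exact Fin.ext (by omega)
      subst hu; subst hv
      simpa using hlt i
    · intro x hx
      simp only [diagT, decide_eq_true_eq] at hx
      obtain ⟨a, ha⟩ := hx
      have hxa : (fun i => if x i = 0 then σ i (B s) else σ i (B t))
          = fun i => if a = 0 then σ i (B s) else σ i (B t) := by
        funext i; rw [ha i]
      rw [hxa]
      by_cases h0 : a = 0
      · simp only [h0, if_pos]
        exact ((perms_spec (Ms k).1 (Ms k).2.1) _).mpr ⟨B s, fun i => rfl⟩
      · simp only [h0, if_neg, ite_false]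
        exact ((perms_spec (Ms k).1 (Ms k).2.1) _).mpr ⟨B t, fun i => rfl⟩
  obtain ⟨s, t, hst, hK⟩ := Fintype.exists_ne_map_eq_of_card_lt K (by simp)
  rcases hst.lt_or_gt with h | h
  · exact aux s t h hK
  · exact aux t s h hK.symm

lemma step1 (hd : 0 < d) (Ms' : Fin l → S2 d m) (cs' : Fin (d-1) → CT l m)
    (h : A Ms cs = A Ms' cs') : cs = cs' := by
  funext j
  apply Subtype.ext
  funext y
  have hjd : (j : ℕ) + 1 < d := by have := j.isLt; omega
  set i : Fin d := ⟨(j : ℕ) + 1, hjd⟩ with hi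
  have hcci : cc cs i = cs j := cc_succ cs j hjd
  have hcci' : cc cs' i = cs' j := cc_succ cs' j hjd
  set k := (cc cs i).1 y with hk
  obtain ⟨b', hb'⟩ := emb_surj (cc cs i) hk.symm
  set b := (perms (Ms k).1 (Ms k).2.1 i).symm b' with hb
  set x := ent Ms cs k b with hx
  have hxi : x i = y := by
    rw [hx]
    show emb (cc cs i) k (perms (Ms k).1 (Ms k).2.1 i b) = y
    rw [hb]
    simp only [Equiv.apply_symm_apply]
    exact hb'
  have hAx : A Ms cs x = true := (A_iff Ms cs x).mpr ⟨k, b, rfl⟩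
  rw [h] at hAx
  obtain ⟨k₂, b₂, hx2⟩ := (A_iff Ms' cs' x).mp hAx
  set i0 : Fin d := ⟨0, hd⟩ with hi0
  have e0 : (cc cs i0).1 (x i0) = k := ent_cc Ms cs k b i0
  have e0' : (cc cs' i0).1 (x i0) = k₂ := by
    rw [hx2]; exact ent_cc Ms' cs' k₂ b₂ i0
  have hcc0 : cc cs i0 = cc cs' i0 := by
    rw [cc_zero cs hd, cc_zero cs' hd]
  have hkk : k = k₂ := by rw [← e0, hcc0, e0']
  have ei' : (cc cs' i).1 y = k₂ := by
    rw [← hxi, hx2]; exact ent_cc Ms' cs' k₂ b₂ i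
  show (cs j).1 y = (cs' j).1 y
  rw [← hcci, ← hcci', ← hk, ei', hkk]

lemma step2 (Ms' : Fin l → S2 d m) (h : A Ms cs = A Ms' cs) : Ms = Ms' := by
  have claim : ∀ (N : Fin l → S2 d m) (k : Fin l) (x : Fin d → Fin m),
      (N k).1 x = true ↔ A N cs (fun i => emb (cc cs i) k (x i)) = true := by
    intro N k x
    constructor
    · intro hx
      obtain ⟨b, hbx⟩ := ((perms_spec (N k).1 (N k).2.1) x).mp hx
      refine (A_iff N cs _).mpr ⟨k, b, ?_⟩
      funext i
      show emb (cc cs i) k (x i) = ent N cs k b i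
      rw [hbx i]; rfl
    · intro hx
      obtain ⟨k₂, b₂, hx2⟩ := (A_iff N cs _).mp hx
      have hki : ∀ i, emb (cc cs i) k (x i)
          = emb (cc cs i) k₂ (perms (N k₂).1 (N k₂).2.1 i b₂) := fun i => congrFun hx2 i
      have hne : Nonempty (Fin d) ∨ d = 0 := by
        rcases Nat.eq_zero_or_pos d with h0 | h0
        · exact Or.inr h0
        · exact Or.inl ⟨⟨0, h0⟩⟩
      apply ((perms_spec (N k).1 (N k).2.1) x).mpr
      refine ⟨b₂, fun i => ?_⟩
      obtain ⟨hk, hbb⟩ := emb_pair_inj _ (hki i)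
      rw [hbb, ← hk]
  funext k
  apply Subtype.ext
  funext x
  rw [Bool.eq_iff_iff, claim Ms k x, claim Ms' k x, h]

end Stmt14Aux

open Stmt14Aux

/-- Merging bound: `|S_{I^d_{l+1}}(lm)| ≥ |S_{I^d_2}(m)|^l · ((lm)!/(m!)^l)^(d-1)`. -/
theorem stmt14 (d l m : ℕ) (hd : 1 ≤ d) (hl : 1 ≤ l) (hm : 1 ≤ m) :
    cardS (diagT d 2) m ^ l * ((l * m).factorial / m.factorial ^ l) ^ (d - 1)
      ≤ cardS (diagT d (l + 1)) (l * m) := by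
  classical
  set Tgt := {M : (Fin d → Fin (l*m)) → Bool //
    isPermTensor M ∧ ¬ containsT (diagT d (l+1)) M}
  let F : (Fin l → S2 d m) × (Fin (d-1) → CT l m) → Tgt :=
    fun p => ⟨A p.1 p.2, A_perm p.1 p.2, A_avoids p.1 p.2⟩
  have hFinj : Function.Injective F := by
    intro p q hpq
    have hA : A p.1 p.2 = A q.1 q.2 := congrArg Subtype.val hpq
    have hcs : p.2 = q.2 := step1 p.1 p.2 hd q.1 q.2 hA
    have hMs : p.1 = q.1 := by
      apply step2 p.1 p.2 q.1
      rw [hA, hcs]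
    exact Prod.ext hMs hcs
  have hcard := Nat.card_le_card_of_injective F hFinj
  have hdom : Nat.card ((Fin l → S2 d m) × (Fin (d-1) → CT l m))
      = cardS (diagT d 2) m ^ l * Nat.card (CT l m) ^ (d-1) := by
    rw [Nat.card_prod, Nat.card_fun, Nat.card_fun]
    simp [Nat.card_eq_fintype_card, cardS]
  rw [hdom] at hcard
  refine le_trans ?_ hcard
  exact Nat.mul_le_mul_left _ (Nat.pow_le_pow_left (multinomial_le_cardCT l m) _)
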